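/- Let (r_α)_{α>0} be a generator of a regularisation method with constant ρ ∈ (0,1) as in condition (i). If there exist an increasing function φ : (0,∞) → (0,∞) and a constant C > 0 such that ‖x_α(y) − x†‖² ≤ C·φ(α) for all α > 0, then e(λ) ≤ (C/(1−ρ)²)·φ(λ) for all λ > 0. (First implication of Proposition 2.4.) -/

import Mathlib

open MeasureTheory RealInnerProductSpace Filter

theorem statement0
    {X : Type*} [NormedAddCommGroup X] [InnerProductSpace ℝ X] [CompleteSpace X]
    {Y : Type*} [NormedAddCommGroup Y] [InnerProductSpace ℝ Y] [CompleteSpace Y]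
    (L : X →L[ℝ] Y) (y : Y) (xdag : X)
    (hsol : L xdag = y) (hmin : ∀ x : X, L x = y → ‖xdag‖ ≤ ‖x‖)
    (r : ℝ → ℝ → ℝ) (ρ ρt : ℝ) (hρ0 : 0 < ρ) (hρ1 : ρ < 1) (hρt0 : 0 < ρt) (hρt1 : ρt < 1)
    (hrcont : ∀ α > (0:ℝ), ContinuousOn (r α) (Set.Ici 0))
    (hrnonneg : ∀ α > (0:ℝ), ∀ t ∈ Set.Ici (0:ℝ), 0 ≤ r α t)
    (hrbound : ∀ α > (0:ℝ), ∀ t > (0:ℝ), r α t ≤ min (1 / t) (ρ / Real.sqrt (α * t)))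
    (hrt_anti : ∀ α > (0:ℝ), AntitoneOn (fun t => (1 - t * r α t) ^ 2) (Set.Ici 0))
    (hrt_cont : ∀ t ∈ Set.Ici (0:ℝ), ContinuousOn (fun α => (1 - t * r α t) ^ 2) (Set.Ioi 0))
    (hrt_mono : ∀ t ∈ Set.Ici (0:ℝ), MonotoneOn (fun α => (1 - t * r α t) ^ 2) (Set.Ioi 0))
    (hrt_lt : ∀ α > (0:ℝ), (1 - α * r α α) ^ 2 < ρt)
    (e : StieltjesFunction ℝ) (he0 : e 0 = 0)
    (he_const : ∀ t : ℝ, ‖L‖ ^ 2 ≤ t → e t = e (‖L‖ ^ 2))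
    (xa : ℝ → X)
    (hint : ∀ α > (0:ℝ),
      ‖xa α - xdag‖ ^ 2 = ∫ t in Set.Ioc (0:ℝ) (‖L‖ ^ 2), (1 - t * r α t) ^ 2 ∂e.measure)
    (φ : ℝ → ℝ) (hφmono : ∀ s t : ℝ, 0 < s → s ≤ t → φ s ≤ φ t)
    (hφpos : ∀ t > (0:ℝ), 0 < φ t)
    (C : ℝ) (hC : 0 < C)
    (hrate : ∀ α > (0:ℝ), ‖xa α - xdag‖ ^ 2 ≤ C * φ α) :
    ∀ t > (0:ℝ), e t ≤ C / (1 - ρ) ^ 2 * φ t := by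
  intro t ht
  have h1ρ : (0:ℝ) < 1 - ρ := by linarith
  by_cases hL : ‖L‖ = 0
  · have hLt2 : ‖L‖ ^ 2 ≤ t := by rw [hL]; simpa using ht.le
    have h0 : e t = 0 := by
      rw [he_const t hLt2, hL]
      simpa using he0
    rw [h0]
    have := hφpos t ht
    positivity
  · have hL2 : (0:ℝ) < ‖L‖ ^ 2 := by
      have : 0 < ‖L‖ := lt_of_le_of_ne (norm_nonneg L) (Ne.symm hL)
      positivity
    set m := min t (‖L‖ ^ 2) with hm
    have hm0 : 0 < m := lt_min ht hL2
    have hmt : m ≤ t := min_le_left _ _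
    have hmL : m ≤ ‖L‖ ^ 2 := min_le_right _ _
    -- pointwise bound
    have hpt : ∀ s ∈ Set.Ioc (0:ℝ) m, (1 - ρ) ^ 2 ≤ (1 - s * r t s) ^ 2 := by
      intro s hs
      have hs0 : 0 < s := hs.1
      have hst : s ≤ t := hs.2.trans hmt
      have hr1 : r t s ≤ ρ / Real.sqrt (t * s) :=
        (hrbound t ht s hs0).trans (min_le_right _ _)
      have hsq : s ≤ Real.sqrt (t * s) := by
        have h := Real.sqrt_le_sqrt (mul_le_mul_of_nonneg_right hst hs0.le : s * s ≤ t * s)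
        rwa [Real.sqrt_mul_self hs0.le] at h
      have hsqpos : 0 < Real.sqrt (t * s) := lt_of_lt_of_le hs0 hsq
      have hsr : s * r t s ≤ ρ := by
        calc s * r t s ≤ s * (ρ / Real.sqrt (t * s)) :=
              mul_le_mul_of_nonneg_left hr1 hs0.le
          _ = ρ * (s / Real.sqrt (t * s)) := by ring
          _ ≤ ρ * 1 := by
              apply mul_le_mul_of_nonneg_left _ hρ0.le
              exact (div_le_one hsqpos).mpr hsq
          _ = ρ := mul_one ρ
      have h1 : 1 - ρ ≤ 1 - s * r t s := by linarith
      exact pow_le_pow_left₀ h1ρ.le h1 2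
    -- integrability
    have hcont : ContinuousOn (fun s => (1 - s * r t s) ^ 2) (Set.Ici 0) := by
      exact ((continuousOn_const.sub (continuousOn_id.mul (hrcont t ht))).pow 2)
    have hintg : IntegrableOn (fun s => (1 - s * r t s) ^ 2)
        (Set.Ioc (0:ℝ) (‖L‖ ^ 2)) e.measure := by
      have := (hcont.mono (Set.Icc_subset_Ici_self : Set.Icc (0:ℝ) (‖L‖ ^ 2) ⊆ Set.Ici 0)).integrableOn_Icc
        (μ := e.measure)
      exact this.mono_set Set.Ioc_subset_Icc_self
    have hintg' : IntegrableOn (fun s => (1 - s * r t s) ^ 2)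
        (Set.Ioc (0:ℝ) m) e.measure :=
      hintg.mono_set (Set.Ioc_subset_Ioc le_rfl hmL)
    have hmeasm : e.measure (Set.Ioc 0 m) = ENNReal.ofReal (e m) := by
      rw [e.measure_Ioc, he0, sub_zero]
    have hem0 : 0 ≤ e m := by
      have := e.mono hm0.le
      linarith [he0 ▸ this]
    have hconst : ∫ s in Set.Ioc (0:ℝ) m, (1 - ρ) ^ 2 ∂e.measure
        = (e m) * (1 - ρ) ^ 2 := by
      rw [setIntegral_const, measureReal_def, hmeasm, ENNReal.toReal_ofReal hem0, smul_eq_mul]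
    have h1 : (e m) * (1 - ρ) ^ 2 ≤
        ∫ s in Set.Ioc (0:ℝ) m, (1 - s * r t s) ^ 2 ∂e.measure := by
      rw [← hconst]
      apply setIntegral_mono_on _ hintg' measurableSet_Ioc hpt
      exact integrableOn_const (by rw [hmeasm]; exact ENNReal.ofReal_ne_top)
    have h2 : ∫ s in Set.Ioc (0:ℝ) m, (1 - s * r t s) ^ 2 ∂e.measure ≤
        ∫ s in Set.Ioc (0:ℝ) (‖L‖ ^ 2), (1 - s * r t s) ^ 2 ∂e.measure := by
      apply setIntegral_mono_set hintg
      · filter_upwards with s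
        positivity
      · exact HasSubset.Subset.eventuallyLE (Set.Ioc_subset_Ioc le_rfl hmL)
    have h3 : ∫ s in Set.Ioc (0:ℝ) (‖L‖ ^ 2), (1 - s * r t s) ^ 2 ∂e.measure ≤ C * φ t := by
      rw [← hint t ht]; exact hrate t ht
    have hkey : (e m) * (1 - ρ) ^ 2 ≤ C * φ t := le_trans h1 (le_trans h2 h3)
    have het : e t = e m := by
      rcases le_total t (‖L‖ ^ 2) with h | h
      · rw [hm, min_eq_left h]
      · rw [he_const t h, hm, min_eq_right h]
    rw [het]
    rw [div_mul_eq_mul_div, le_div_iff₀ (by positivity)]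
    linarith [hkey]
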